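/- Let A(k_1, …, k_n) be a polynomial over ℂ. Then (id + E_{k_{i+1}} Δ_{k_i}) A is antisymmetric in k_i and k_{i+1} for every i with 1 ≤ i ≤ n − 1 if and only if (∏_{1 ≤ p < q ≤ n} (id + E_{k_q} Δ_{k_p})) A is antisymmetric in all of the variables k_1, …, k_n (i.e., changes sign under every transposition of two variables). -/

import Mathlib

open MvPolynomial Finset

/-- The shift of a polynomial by an integer vector `a`:
`(shiftPolyC a p)(x₁,…,xₙ) = p(x₁ + a₁, …, xₙ + aₙ)`. -/
noncomputable def shiftPolyC {n : ℕ} (a : Fin n → ℤ) (p : MvPolynomial (Fin n) ℂ) :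
    MvPolynomial (Fin n) ℂ :=
  aeval (fun j => X j + C ((a j : ℂ))) p

/-- A Laurent polynomial `Q` in the commuting shift operators `E₁,…,Eₙ` (an element of the
group algebra `ℂ[ℤⁿ]`, the exponent vector recording the shift) acts on polynomials. -/
noncomputable def opApplyC {n : ℕ} (Q : AddMonoidAlgebra ℂ (Fin n → ℤ))
    (p : MvPolynomial (Fin n) ℂ) : MvPolynomial (Fin n) ℂ :=
  Q.coeff.sum fun a c => c • shiftPolyC a p

/-- The shift operator `E_{k_i}` as an element of the operator algebra. -/
noncomputable def EshC {n : ℕ} (i : Fin n) : AddMonoidAlgebra ℂ (Fin n → ℤ) :=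
  AddMonoidAlgebra.single (Pi.single i 1) 1

/-- The inverse shift operator `E_{k_i}⁻¹`. -/
noncomputable def EshInvC {n : ℕ} (i : Fin n) : AddMonoidAlgebra ℂ (Fin n → ℤ) :=
  AddMonoidAlgebra.single (Pi.single i (-1)) 1

/-- The difference operator `Δ_{k_i} = E_{k_i} - id`. -/
noncomputable def DltC {n : ℕ} (i : Fin n) : AddMonoidAlgebra ℂ (Fin n → ℤ) :=
  EshC i - 1

/-- All pairs `(p, q)` with `p < q`. -/
def pairs (n : ℕ) : Finset (Fin n × Fin n) :=
  Finset.univ.filter fun p => p.1 < p.2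

namespace AntiAux

variable {n : ℕ}

/-! ### The shift as an algebra homomorphism, and the operator action -/

/-- The shift as an algebra hom. -/
noncomputable def shiftAlg (a : Fin n → ℤ) :
    MvPolynomial (Fin n) ℂ →ₐ[ℂ] MvPolynomial (Fin n) ℂ :=
  aeval (fun j => X j + C ((a j : ℂ)))

lemma shiftPolyC_eq (a : Fin n → ℤ) (p : MvPolynomial (Fin n) ℂ) :
    shiftPolyC a p = shiftAlg a p := rfl

lemma shiftAlg_add (a b : Fin n → ℤ) (p : MvPolynomial (Fin n) ℂ) :
    shiftAlg a (shiftAlg b p) = shiftAlg (a + b) p := by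
  rw [shiftAlg, shiftAlg, shiftAlg, ← AlgHom.comp_apply, comp_aeval]
  have h : (fun i => (aeval fun j => X j + C ((a j : ℂ))) (X i + C ((b i : ℂ))))
      = fun j : Fin n => X j + C (((a + b) j : ℤ) : ℂ) := by
    funext j
    simp only [map_add, aeval_X, aeval_C, algebraMap_eq, Pi.add_apply, Int.cast_add]
    ring
  rw [h]

lemma shiftAlg_zero (p : MvPolynomial (Fin n) ℂ) : shiftAlg (0 : Fin n → ℤ) p = p := by
  rw [shiftAlg]
  simp only [Pi.zero_apply, Int.cast_zero, map_zero, add_zero]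
  rw [aeval_X_left_apply]

/-- shift operators as a monoid hom into endomorphisms. -/
noncomputable def shiftHom :
    Multiplicative (Fin n → ℤ) →* Module.End ℂ (MvPolynomial (Fin n) ℂ) where
  toFun a := (shiftAlg (Multiplicative.toAdd a)).toLinearMap
  map_one' := LinearMap.ext fun p => shiftAlg_zero p
  map_mul' a b := LinearMap.ext fun p => (shiftAlg_add _ _ p).symm

noncomputable def opHom :
    AddMonoidAlgebra ℂ (Fin n → ℤ) →ₐ[ℂ] Module.End ℂ (MvPolynomial (Fin n) ℂ) :=
  AddMonoidAlgebra.lift ℂ _ (Fin n → ℤ) shiftHom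

lemma opApplyC_eq (Q : AddMonoidAlgebra ℂ (Fin n → ℤ)) (p : MvPolynomial (Fin n) ℂ) :
    opApplyC Q p = opHom Q p := by
  rw [opHom, AddMonoidAlgebra.lift_apply]
  rw [opApplyC, Finsupp.sum, Finsupp.sum, LinearMap.coe_sum, Finset.sum_apply]
  exact Finset.sum_congr rfl fun a _ => rfl

lemma op_one (p : MvPolynomial (Fin n) ℂ) : opApplyC 1 p = p := by
  rw [opApplyC_eq, map_one]; rfl

lemma op_mul (Q R : AddMonoidAlgebra ℂ (Fin n → ℤ)) (p : MvPolynomial (Fin n) ℂ) :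
    opApplyC (Q * R) p = opApplyC Q (opApplyC R p) := by
  rw [opApplyC_eq, opApplyC_eq, opApplyC_eq, map_mul]; rfl

lemma op_add (Q R : AddMonoidAlgebra ℂ (Fin n → ℤ)) (p : MvPolynomial (Fin n) ℂ) :
    opApplyC (Q + R) p = opApplyC Q p + opApplyC R p := by
  rw [opApplyC_eq, opApplyC_eq, opApplyC_eq, map_add]; rfl

lemma op_sub (Q R : AddMonoidAlgebra ℂ (Fin n → ℤ)) (p : MvPolynomial (Fin n) ℂ) :
    opApplyC (Q - R) p = opApplyC Q p - opApplyC R p := by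
  rw [opApplyC_eq, opApplyC_eq, opApplyC_eq, map_sub]; rfl

lemma op_neg_arg (Q : AddMonoidAlgebra ℂ (Fin n → ℤ)) (p : MvPolynomial (Fin n) ℂ) :
    opApplyC Q (-p) = -opApplyC Q p := by
  rw [opApplyC_eq, opApplyC_eq, map_neg]

lemma op_single (a : Fin n → ℤ) (p : MvPolynomial (Fin n) ℂ) :
    opApplyC (AddMonoidAlgebra.single a 1) p = shiftAlg a p := by
  rw [opApplyC, AddMonoidAlgebra.coeff_single, Finsupp.sum_single_index] <;> simp [shiftPolyC_eq]

/-! ### Permutations acting on the operator algebra -/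

/-- precomposition with `e.symm` as an additive equivalence. -/
def permE (e : Equiv.Perm (Fin n)) : (Fin n → ℤ) ≃+ (Fin n → ℤ) where
  toFun a := a ∘ e.symm
  invFun a := a ∘ e
  left_inv a := by funext j; simp
  right_inv a := by funext j; simp
  map_add' a b := rfl

noncomputable def permA (e : Equiv.Perm (Fin n)) :
    AddMonoidAlgebra ℂ (Fin n → ℤ) ≃ₐ[ℂ] AddMonoidAlgebra ℂ (Fin n → ℤ) :=
  AddMonoidAlgebra.domCongr ℂ ℂ (permE e)

lemma permA_single (e : Equiv.Perm (Fin n)) (a : Fin n → ℤ) (c : ℂ) :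
    permA e (AddMonoidAlgebra.single a c) = AddMonoidAlgebra.single (a ∘ e.symm) c :=
  AddMonoidAlgebra.domCongr_single (permE e) a c

lemma permA_Esh (e : Equiv.Perm (Fin n)) (i : Fin n) :
    permA e (EshC i) = EshC (e i) := by
  rw [EshC, EshC, permA_single]
  congr 1
  funext x
  by_cases h : x = e i
  · subst h; simp [Pi.single_apply]
  · have h2 : e.symm x ≠ i := fun hh => h (by rw [← hh, Equiv.apply_symm_apply])
    simp [Pi.single_apply, h, h2]

lemma permA_Dlt (e : Equiv.Perm (Fin n)) (i : Fin n) :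
    permA e (DltC i) = DltC (e i) := by
  rw [DltC, DltC, map_sub, map_one, permA_Esh]

lemma permA_T (e : Equiv.Perm (Fin n)) (p q : Fin n) :
    permA e (1 + EshC q * DltC p) = 1 + EshC (e q) * DltC (e p) := by
  rw [map_add, map_one, map_mul, permA_Esh, permA_Dlt]

lemma rename_shift (e : Equiv.Perm (Fin n)) (a : Fin n → ℤ) (p : MvPolynomial (Fin n) ℂ) :
    rename e (shiftAlg a p) = shiftAlg (a ∘ e.symm) (rename e p) := by
  rw [shiftAlg, shiftAlg, ← AlgHom.comp_apply, comp_aeval, aeval_rename]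
  have h : (fun i => (rename ⇑e) (X i + C ((a i : ℂ))))
      = (fun j : Fin n => X j + C (((a ∘ ⇑e.symm) j : ℤ) : ℂ)) ∘ ⇑e := by
    funext i
    simp [Function.comp]
  rw [h]

lemma permA_apply_eq (e : Equiv.Perm (Fin n)) (Q : AddMonoidAlgebra ℂ (Fin n → ℤ)) :
    (permA e Q).coeff = Finsupp.equivMapDomain (permE e).toEquiv Q.coeff :=
  Finsupp.ext fun x => by simp [permA, Finsupp.equivMapDomain_apply]

lemma rename_op (e : Equiv.Perm (Fin n)) (Q : AddMonoidAlgebra ℂ (Fin n → ℤ))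
    (p : MvPolynomial (Fin n) ℂ) :
    rename e (opApplyC Q p) = opApplyC (permA e Q) (rename e p) := by
  rw [opApplyC, opApplyC, permA_apply_eq, Finsupp.sum_equivMapDomain]
  rw [map_finsuppSum]
  refine Finsupp.sum_congr fun a _ => ?_
  rw [map_smul, shiftPolyC_eq, shiftPolyC_eq, rename_shift]
  rfl

/-! ### Degree bookkeeping: shiftAlg a f - f strictly lowers total degree -/

/-- degree of an exponent vector -/
def deg (m : Fin n →₀ ℕ) : ℕ := m.sum fun _ e => e

lemma deg_add (m m' : Fin n →₀ ℕ) : deg (m + m') = deg m + deg m' :=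
  Finsupp.sum_add_index' (fun _ => rfl) (fun _ _ _ => rfl)

lemma deg_single (i : Fin n) (b : ℕ) : deg (Finsupp.single i b) = b :=
  Finsupp.sum_single_index rfl

lemma shiftAlg_X (a : Fin n → ℤ) (i : Fin n) :
    shiftAlg a (X i) = X i + C ((a i : ℂ)) := by
  rw [shiftAlg, aeval_X]

/-- single-variable power case -/
lemma support_pow_sub (i : Fin n) (c : ℂ) (b : ℕ) :
    ∀ m ∈ ((X i + C c) ^ b - X i ^ b).support, deg m < b := by
  intro m hm
  rw [add_pow, Finset.sum_range_succ] at hm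
  simp only [Nat.sub_self, pow_zero, Nat.choose_self, Nat.cast_one, mul_one] at hm
  rw [add_sub_cancel_right] at hm
  have := MvPolynomial.support_sum hm
  rw [Finset.mem_biUnion] at this
  obtain ⟨k, hk, hmk⟩ := this
  rw [Finset.mem_range] at hk
  have hterm : (X (R := ℂ) i ^ k * C c ^ (b - k) * (b.choose k : MvPolynomial (Fin n) ℂ))
      = monomial (Finsupp.single i k) (c ^ (b - k) * (b.choose k : ℂ)) := by
    rw [X_pow_eq_monomial, ← C_pow, ← C_eq_coe_nat]
    rw [mul_assoc, ← C_mul, C_apply, monomial_mul, add_zero, one_mul]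
  rw [hterm] at hmk
  have := support_monomial_subset hmk
  rw [Finset.mem_singleton] at this
  subst this
  rw [deg_single]
  exact hk

lemma support_shift_monomial_sub (a : Fin n → ℤ) (s : Fin n →₀ ℕ) :
    ∀ m ∈ (shiftAlg a (monomial s 1) - monomial s 1).support, deg m < deg s := by
  induction s using Finsupp.induction with
  | zero =>
    intro m hm
    have h1 : (monomial (0 : Fin n →₀ ℕ) (1 : ℂ)) = C 1 := by rw [C_apply]
    rw [h1, shiftAlg, aeval_C] at hm
    simp at hm
  | single_add i b s hi hb ih =>
    intro m hm
    set M : MvPolynomial (Fin n) ℂ := monomial (Finsupp.single i b) 1 with hM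
    set M' : MvPolynomial (Fin n) ℂ := monomial s 1 with hM'
    have hsplit : monomial (Finsupp.single i b + s) (1 : ℂ) = M * M' := by
      rw [hM, hM', monomial_mul, one_mul]
    rw [hsplit, map_mul] at hm
    have hdecomp : shiftAlg a M * shiftAlg a M' - M * M'
        = (shiftAlg a M - M) * shiftAlg a M' + M * (shiftAlg a M' - M') := by ring
    rw [hdecomp] at hm
    have hsupp' : ∀ m' ∈ (shiftAlg a M').support, deg m' ≤ deg s := by
      intro m' hm'
      have : shiftAlg a M' = M' + (shiftAlg a M' - M') := by ring
      rw [this] at hm'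
      rcases Finset.mem_union.mp (support_add hm') with h | h
      · have := support_monomial_subset h
        rw [Finset.mem_singleton] at this
        subst this; rfl
      · exact (ih m' h).le
    have hsuppM : ∀ m' ∈ (shiftAlg a M - M).support, deg m' < b := by
      have hXb : M = X i ^ b := by rw [hM, X_pow_eq_monomial]
      have hsh : shiftAlg a M = (X i + C ((a i : ℂ))) ^ b := by
        rw [hXb, map_pow, shiftAlg_X]
      intro m' hm'
      rw [hsh, hXb] at hm'
      exact support_pow_sub i _ b m' hm'
    have hdeg : deg (Finsupp.single i b + s) = b + deg s := by
      rw [deg_add, deg_single]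
    rw [hdeg]
    rcases Finset.mem_union.mp (support_add hm) with h | h
    · have h2 := support_mul _ _ h
      rw [Finset.mem_add] at h2
      obtain ⟨m1, h1, m2, h2, rfl⟩ := h2
      rw [deg_add]
      have := hsuppM m1 h1
      have := hsupp' m2 h2
      omega
    · have h2 := support_mul _ _ h
      rw [Finset.mem_add] at h2
      obtain ⟨m1, h1, m2, h2, rfl⟩ := h2
      have hm1 : m1 = Finsupp.single i b := by
        have := support_monomial_subset h1
        rwa [Finset.mem_singleton] at this
      subst hm1
      rw [deg_add, deg_single]
      have := ih m2 h2
      omega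

lemma support_shift_sub (a : Fin n → ℤ) (f : MvPolynomial (Fin n) ℂ) :
    ∀ m ∈ (shiftAlg a f - f).support, deg m < f.totalDegree := by
  intro m hm
  have hf : shiftAlg a f - f
      = ∑ s ∈ f.support, (coeff s f) • (shiftAlg a (monomial s 1) - monomial s 1) := by
    conv_lhs => rw [f.as_sum]
    rw [map_sum, ← Finset.sum_sub_distrib]
    refine Finset.sum_congr rfl fun s _ => ?_
    rw [smul_sub]
    congr 1
    · rw [← map_smul, smul_monomial, smul_eq_mul, mul_one]
    · rw [smul_monomial, smul_eq_mul, mul_one]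
  rw [hf] at hm
  have := MvPolynomial.support_sum hm
  rw [Finset.mem_biUnion] at this
  obtain ⟨s, hs, hms⟩ := this
  have hms' := support_smul hms
  calc deg m < deg s := support_shift_monomial_sub a s m hms'
    _ ≤ f.totalDegree := le_totalDegree hs

lemma totalDegree_shift_le (a : Fin n → ℤ) (f : MvPolynomial (Fin n) ℂ) :
    (shiftAlg a f).totalDegree ≤ f.totalDegree := by
  have h : shiftAlg a f = f + (shiftAlg a f - f) := by ring
  rw [h]
  refine le_trans (totalDegree_add _ _) (max_le le_rfl ?_)
  exact Finset.sup_le fun m hm => (support_shift_sub a f m hm).le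

/-- kernel triviality for `1 + E_q Δ_p` -/
lemma inj_T_ker (p q : Fin n) (f : MvPolynomial (Fin n) ℂ)
    (h : f + shiftAlg (Pi.single q 1) (shiftAlg (Pi.single p 1) f - f) = 0) : f = 0 := by
  by_contra hf
  set g : MvPolynomial (Fin n) ℂ := shiftAlg (Pi.single p 1) f - f with hg
  have hNf : shiftAlg (Pi.single q 1) g = -f := by linear_combination h
  rcases eq_or_ne g 0 with h0 | h0
  · rw [h0, map_zero] at hNf
    exact hf (neg_eq_zero.mp hNf.symm)
  · have hgd : g.totalDegree < f.totalDegree := by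
      have hne : g.support.Nonempty := support_nonempty.mpr h0
      obtain ⟨m0, hm0⟩ := hne
      have hpos : 0 < f.totalDegree := lt_of_le_of_lt (Nat.zero_le _)
        (support_shift_sub _ f m0 hm0)
      rw [totalDegree]
      exact (Finset.sup_lt_iff hpos).mpr fun m hm => support_shift_sub _ f m hm
    have : f.totalDegree < f.totalDegree := by
      calc f.totalDegree = (-f).totalDegree := (totalDegree_neg f).symm
        _ = (shiftAlg (Pi.single q 1) g).totalDegree := by rw [hNf]
        _ ≤ g.totalDegree := totalDegree_shift_le _ g
        _ < f.totalDegree := hgd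
    exact absurd this (lt_irrefl _)

lemma op_T_eq (p q : Fin n) (f : MvPolynomial (Fin n) ℂ) :
    opApplyC (1 + EshC q * DltC p) f
      = f + shiftAlg (Pi.single q 1) (shiftAlg (Pi.single p 1) f - f) := by
  rw [op_add, op_one, op_mul, DltC, op_sub, op_one, EshC, op_single, EshC, op_single, map_sub]

lemma inj_T (p q : Fin n) :
    Function.Injective (fun f => opApplyC (1 + EshC q * DltC p) f) := by
  intro x y hxy
  simp only at hxy
  have h : opApplyC (1 + EshC q * DltC p) (x - y) = 0 := by
    rw [opApplyC_eq, map_sub, ← opApplyC_eq, ← opApplyC_eq, hxy, sub_self]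
  rw [op_T_eq] at h
  exact sub_eq_zero.mp (inj_T_ker p q (x - y) h)

lemma inj_prod (S : Finset (Fin n × Fin n)) :
    Function.Injective (fun f => opApplyC (∏ x ∈ S, (1 + EshC x.2 * DltC x.1)) f) := by
  induction S using Finset.induction with
  | empty => intro u v huv; simpa [Finset.prod_empty, op_one] using huv
  | insert _ _ hx ih =>
    rename_i a s
    intro u v huv
    simp only [Finset.prod_insert hx, op_mul] at huv
    exact ih (inj_T a.1 a.2 huv)

/-! ### Combinatorics of the adjacent swap on pairs -/

lemma mem_pairs {x : Fin n × Fin n} : x ∈ pairs n ↔ x.1 < x.2 := by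
  simp [pairs]

lemma swap_adj {i j p q : Fin n} (hij : (i : ℕ) + 1 = j) (hpq : p < q)
    (hne : (p, q) ≠ (i, j)) :
    Equiv.swap i j p < Equiv.swap i j q ∧ (Equiv.swap i j p, Equiv.swap i j q) ≠ (i, j) := by
  have hijlt : i < j := by rw [Fin.lt_def]; omega
  have hijne : i ≠ j := ne_of_lt hijlt
  rw [Fin.lt_def] at hpq hijlt
  by_cases hqi : q = i
  · have hpi : p ≠ i := by intro h; rw [h, hqi] at hpq; omega
    have hpj : p ≠ j := by
      intro h; rw [Fin.ext_iff] at h; rw [hqi] at hpq; omega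
    rw [hqi, Equiv.swap_apply_left, Equiv.swap_apply_of_ne_of_ne hpi hpj]
    constructor
    · rw [Fin.lt_def]; rw [hqi] at hpq; omega
    · intro hcon
      rw [Prod.mk.injEq] at hcon
      exact hpi hcon.1
  · by_cases hqj : q = j
    · have hpi : p ≠ i := by
        intro h; exact hne (by rw [h, hqj])
      have hpj : p ≠ j := by
        intro h; rw [h, hqj] at hpq; omega
      rw [hqj, Equiv.swap_apply_right, Equiv.swap_apply_of_ne_of_ne hpi hpj]
      constructor
      · rw [Fin.lt_def]
        have hpi' : (p : ℕ) ≠ (i : ℕ) := fun h => hpi (Fin.ext h)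
        rw [hqj] at hpq
        omega
      · intro hcon
        rw [Prod.mk.injEq] at hcon
        exact hijne hcon.2
    · rw [Equiv.swap_apply_of_ne_of_ne hqi hqj]
      by_cases hpi : p = i
      · rw [hpi, Equiv.swap_apply_left]
        constructor
        · rw [Fin.lt_def]
          have hqi' : (q : ℕ) ≠ (i : ℕ) := fun h => hqi (Fin.ext h)
          have hqj' : (q : ℕ) ≠ (j : ℕ) := fun h => hqj (Fin.ext h)
          rw [hpi] at hpq
          omega
        · intro hcon
          rw [Prod.mk.injEq] at hcon
          exact hijne.symm hcon.1
      · by_cases hpj : p = j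
        · rw [hpj, Equiv.swap_apply_right]
          constructor
          · rw [Fin.lt_def]; rw [hpj] at hpq; omega
          · intro hcon
            rw [Prod.mk.injEq] at hcon
            exact hqj hcon.2
        · rw [Equiv.swap_apply_of_ne_of_ne hpi hpj]
          exact ⟨by rw [Fin.lt_def]; omega, hne⟩

lemma swap_mem_erase {i j : Fin n} (hij : (i : ℕ) + 1 = j) {x : Fin n × Fin n}
    (hx : x ∈ (pairs n).erase (i, j)) :
    (Equiv.swap i j x.1, Equiv.swap i j x.2) ∈ (pairs n).erase (i, j) := by
  rw [Finset.mem_erase] at hx ⊢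
  obtain ⟨hne, hmem⟩ := hx
  rw [mem_pairs] at hmem
  have h := swap_adj hij hmem (by rwa [← Prod.mk.eta (p := x)] at hne)
  exact ⟨h.2, mem_pairs.mpr h.1⟩

lemma prod_swap_erase (i j : Fin n) (hij : (i : ℕ) + 1 = j) :
    (∏ x ∈ (pairs n).erase (i, j),
        (1 + EshC (Equiv.swap i j x.2) * DltC (Equiv.swap i j x.1)))
      = ∏ x ∈ (pairs n).erase (i, j), (1 + EshC x.2 * DltC x.1) := by
  refine Finset.prod_nbij' (fun x => (Equiv.swap i j x.1, Equiv.swap i j x.2))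
    (fun x => (Equiv.swap i j x.1, Equiv.swap i j x.2))
    (fun x hx => swap_mem_erase hij hx) (fun x hx => swap_mem_erase hij hx)
    (fun x _ => by simp) (fun x _ => by simp) (fun x _ => rfl)


lemma adj_iff (i j : Fin n) (hij : (i : ℕ) + 1 = j) (A : MvPolynomial (Fin n) ℂ) :
    (rename (Equiv.swap i j) (opApplyC (1 + EshC j * DltC i) A)
        = -(opApplyC (1 + EshC j * DltC i) A)) ↔
    (rename (Equiv.swap i j) (opApplyC (∏ p ∈ pairs n, (1 + EshC p.2 * DltC p.1)) A)
        = -(opApplyC (∏ p ∈ pairs n, (1 + EshC p.2 * DltC p.1)) A)) := by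
  have hmem : ((i, j) : Fin n × Fin n) ∈ pairs n := by
    have hlt : i < j := by rw [Fin.lt_def]; omega
    exact mem_pairs.mpr hlt
  set σ : Equiv.Perm (Fin n) := Equiv.swap i j with hσ
  set R : AddMonoidAlgebra ℂ (Fin n → ℤ) :=
    ∏ x ∈ (pairs n).erase (i, j), (1 + EshC x.2 * DltC x.1) with hR
  have hprod : (∏ p ∈ pairs n, (1 + EshC p.2 * DltC p.1))
      = (1 + EshC j * DltC i) * R := (Finset.mul_prod_erase _ _ hmem).symm
  set C0 := opApplyC (1 + EshC j * DltC i) A with hC0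
  have hB : opApplyC (∏ p ∈ pairs n, (1 + EshC p.2 * DltC p.1)) A = opApplyC R C0 := by
    rw [hprod, mul_comm, op_mul, hC0]
  have hpermR : permA σ R = R := by
    rw [hR, map_prod]
    calc ∏ x ∈ (pairs n).erase (i,j), permA σ (1 + EshC x.2 * DltC x.1)
        = ∏ x ∈ (pairs n).erase (i,j), (1 + EshC (σ x.2) * DltC (σ x.1)) :=
          Finset.prod_congr rfl fun x _ => permA_T σ x.1 x.2
      _ = R := prod_swap_erase i j hij
  have hrenB : rename ⇑σ (opApplyC (∏ p ∈ pairs n, (1 + EshC p.2 * DltC p.1)) A)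
      = opApplyC R (rename ⇑σ C0) := by
    rw [rename_op, hprod, map_mul, hpermR, permA_T]
    rw [hσ, Equiv.swap_apply_left, Equiv.swap_apply_right]
    rw [mul_comm, op_mul]
    congr 1
    rw [hC0, rename_op, permA_T, Equiv.swap_apply_left, Equiv.swap_apply_right]
  constructor
  · intro h
    rw [hrenB, hB, h, op_neg_arg]
  · intro h
    rw [hrenB, hB] at h
    rw [← op_neg_arg] at h
    exact inj_prod ((pairs n).erase (i, j)) h

end AntiAux

/-- `(id + E_{k_{i+1}} Δ_{k_i}) A` is antisymmetric in `k_i, k_{i+1}` for all `i` iff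
`(∏_{1 ≤ p < q ≤ n} (id + E_{k_q} Δ_{k_p})) A` is antisymmetric in all variables. -/
theorem antisymmetric_iff (n : ℕ) (A : MvPolynomial (Fin n) ℂ) :
    (∀ i j : Fin n, (i : ℕ) + 1 = (j : ℕ) →
      rename (Equiv.swap i j) (opApplyC (1 + EshC j * DltC i) A) =
        -(opApplyC (1 + EshC j * DltC i) A)) ↔
    (∀ i j : Fin n, i ≠ j →
      rename (Equiv.swap i j)
          (opApplyC (∏ p ∈ pairs n, (1 + EshC p.2 * DltC p.1)) A) =
        -(opApplyC (∏ p ∈ pairs n, (1 + EshC p.2 * DltC p.1)) A)) := by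
  obtain _ | m := n
  · constructor <;> · intro _ i j _; exact i.elim0
  · constructor
    · intro h i j hne
      set B := opApplyC (∏ p ∈ pairs (m+1), (1 + EshC p.2 * DltC p.1)) A with hB
      have hadj : ∀ p q : Fin (m+1), (p : ℕ) + 1 = q →
          rename (Equiv.swap p q) B = -B :=
        fun p q hpq => (AntiAux.adj_iff p q hpq A).mp (h p q hpq)
      have hall : ∀ σ : Equiv.Perm (Fin (m+1)),
          rename ⇑σ B = ((Equiv.Perm.sign σ : ℤˣ) : ℤ) • B := by
        intro σ
        have hσ : σ ∈ Submonoid.closure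
            (Set.range fun k : Fin m => Equiv.swap k.castSucc k.succ) := by
          rw [Equiv.Perm.mclosure_swap_castSucc_succ]
          exact Submonoid.mem_top σ
        refine Submonoid.closure_induction ?_ ?_ ?_ hσ
        · rintro x ⟨k, rfl⟩
          have hk : ((k.castSucc : Fin (m+1)) : ℕ) + 1 = ((k.succ : Fin (m+1)) : ℕ) := by
            simp
          have hne' : (k.castSucc : Fin (m+1)) ≠ k.succ := by
            intro hcon
            have := congrArg Fin.val hcon
            omega
          rw [Equiv.Perm.sign_swap hne', hadj _ _ hk]
          simp
        · rw [map_one, Equiv.Perm.coe_one, rename_id]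
          simp
        · intro x y hx hy hpx hpy
          rw [Equiv.Perm.coe_mul, ← rename_rename, hpy, map_zsmul, hpx, smul_smul, map_mul]
          congr 1
          push_cast
          ring
      have := hall (Equiv.swap i j)
      rwa [Equiv.Perm.sign_swap hne, Units.val_neg, Units.val_one, neg_smul, one_smul]
        at this
    · intro h i j hij
      have hne : i ≠ j := by
        intro hcon
        rw [hcon] at hij
        omega
      exact (AntiAux.adj_iff i j hij A).mpr (h i j hne)
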